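/- If p ∈ Q⁰_λ, then #(p) = { (α, Z^p_α, d^p_α) : α ∈ C^p } is a strongly disjoint element of Q*_λ and fil(p) = fil*(#(p)). Conversely, if r ∈ Q*_λ is strongly disjoint, then fil*(r) = fil(p) for some p ∈ Q⁰_λ. -/

import Mathlib

open Set

noncomputable section

def IsUltrafilterOn {α : Type*} (Z : Set α) (d : Set (Set α)) : Prop :=
  (∀ A ∈ d, A ⊆ Z) ∧ Z ∈ d ∧ ∅ ∉ d ∧
  (∀ A B : Set α, A ∈ d → A ⊆ B → B ⊆ Z → B ∈ d) ∧
  (∀ A B : Set α, A ∈ d → B ∈ d → A ∩ B ∈ d) ∧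
  (∀ A : Set α, A ⊆ Z → (A ∈ d ∨ Z \ A ∈ d))

def IsNonprincipalOn {α : Type*} (Z : Set α) (d : Set (Set α)) : Prop :=
  IsUltrafilterOn Z d ∧ ∀ x : α, {x} ∉ d

def IsClubIn (C : Set Ordinal) (lam : Ordinal) : Prop :=
  C ⊆ Iio lam ∧ (∀ β < lam, ∃ δ ∈ C, β < δ) ∧
  (∀ β < lam, β ≠ 0 → sSup (C ∩ Iio β) = β → β ∈ C)

def nextIn (C : Set Ordinal) (δ : Ordinal) : Ordinal := sInf (C \ Iic δ)

/-- An element of `Q⁰_λ`: a club `C` of limit ordinals below `λ`, together with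
a non-principal ultrafilter `d δ` on the interval `Z_δ = [δ, min(C ∖ (δ+1)))` for each `δ ∈ C`. -/
structure QZero (lam : Ordinal) where
  C : Set Ordinal
  d : Ordinal → Set (Set Ordinal)
  club : IsClubIn C lam
  limit : ∀ δ ∈ C, Order.IsSuccLimit δ
  ultra : ∀ δ ∈ C, IsNonprincipalOn (Ico δ (nextIn C δ)) (d δ)

def QZero.Z {lam : Ordinal} (p : QZero lam) (δ : Ordinal) : Set Ordinal :=
  Ico δ (nextIn p.C δ)

def fil {lam : Ordinal} (p : QZero lam) : Set (Set Ordinal) :=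
  {A | A ⊆ Iio lam ∧ ∃ ε < lam, ∀ δ ∈ p.C, ε ≤ δ → A ∩ p.Z δ ∈ p.d δ}

def le0 {lam : Ordinal} (p q : QZero lam) : Prop := fil p ⊆ fil q

def filG {lam : Ordinal} (G : Set (QZero lam)) : Set (Set Ordinal) :=
  ⋃ p ∈ G, fil p

/-- `r ∈ Q*_λ`: a family of triples `(α, Z, d)` with `α < λ`, `Z ⊆ [α, λ)` infinite of
size `< λ`, `d` a non-principal ultrafilter on `Z`, only `< λ` triples per first
coordinate, and `|r| = λ`. -/
def IsQStar (κ : Cardinal.{0}) (r : Set (Ordinal × Set Ordinal × Set (Set Ordinal))) : Prop :=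
  (∀ t ∈ r, t.1 < κ.ord ∧ t.2.1 ⊆ Ico t.1 κ.ord ∧
      Cardinal.aleph0 ≤ Cardinal.mk ↥t.2.1 ∧ Cardinal.mk ↥t.2.1 < Cardinal.lift.{1,0} κ ∧
      IsNonprincipalOn t.2.1 t.2.2) ∧
  (∀ ξ < κ.ord, Cardinal.mk ↥{t | t ∈ r ∧ t.1 = ξ} < Cardinal.lift.{1,0} κ) ∧
  Cardinal.mk ↥r = Cardinal.lift.{1,0} κ

def filStar (κ : Cardinal.{0}) (r : Set (Ordinal × Set Ordinal × Set (Set Ordinal))) :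
    Set (Set Ordinal) :=
  {A | A ⊆ Iio κ.ord ∧ ∃ ε < κ.ord, ∀ t ∈ r, ε ≤ t.1 → A ∩ t.2.1 ∈ t.2.2}

def StronglyDisjoint (r : Set (Ordinal × Set Ordinal × Set (Set Ordinal))) : Prop :=
  (∀ t₁ ∈ r, ∀ t₂ ∈ r, t₁.1 = t₂.1 → t₁ = t₂) ∧
  (∀ t₁ ∈ r, ∀ t₂ ∈ r, t₁.1 < t₂.1 → t₁.2.1 ⊆ Iio t₂.1)

/-- `#(p) = { (α, Z^p_α, d^p_α) : α ∈ C^p }`. -/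
def hashQ {lam : Ordinal} (p : QZero lam) : Set (Ordinal × Set Ordinal × Set (Set Ordinal)) :=
  {t | ∃ α ∈ p.C, t = (α, p.Z α, p.d α)}



-- ==== helper lemmas on ultrafilters ====
section UF
variable {α : Type*} {Z : Set α} {d : Set (Set α)}

lemma uf_compl (h : IsUltrafilterOn Z d) {A : Set α} (hA : A ⊆ Z) (hnA : A ∉ d) : Z \ A ∈ d :=
  (h.2.2.2.2.2 A hA).resolve_left hnA

lemma uf_nonempty (h : IsUltrafilterOn Z d) {A : Set α} (hA : A ∈ d) : A.Nonempty := by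
  rcases A.eq_empty_or_nonempty with he | hne
  · exact absurd (he ▸ hA) h.2.2.1
  · exact hne

end UF

-- ==== part 1 ====
section Part1
variable {κ : Cardinal.{0}} (p : QZero κ.ord)

lemma nextIn_mem_of_lt {C : Set Ordinal} {lam : Ordinal} (hC : IsClubIn C lam) {δ : Ordinal}
    (hδ : δ < lam) : nextIn C δ ∈ C ∧ δ < nextIn C δ := by
  obtain ⟨c, hc, hlt⟩ := hC.2.1 δ hδ
  have hne : (C \ Iic δ).Nonempty := ⟨c, hc, by simpa using hlt⟩
  have h := csInf_mem hne
  exact ⟨h.1, by simpa [nextIn] using h.2⟩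

lemma mem_Z_lt (hδ : (p.Z ·) = (p.Z ·)) : True := trivial

lemma Z_subset {δ : Ordinal} (hδ : δ ∈ p.C) : p.Z δ ⊆ Ico δ κ.ord := by
  intro x hx
  have hlt : δ < κ.ord := p.club.1 hδ
  have hnext := nextIn_mem_of_lt p.club hlt
  exact ⟨hx.1, lt_of_lt_of_le hx.2 (le_of_lt (p.club.1 hnext.1))⟩

lemma Z_infinite {δ : Ordinal} (hδ : δ ∈ p.C) : (p.Z δ).Infinite := by
  have hlt : δ < κ.ord := p.club.1 hδ
  have hnext := nextIn_mem_of_lt p.club hlt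
  have hlim : Order.IsSuccLimit (nextIn p.C δ) := p.limit _ hnext.1
  have hmem : ∀ n : ℕ, δ + (n : Ordinal) ∈ p.Z δ := by
    intro n
    constructor
    · exact le_self_add
    · induction n with
      | zero => simpa using hnext.2
      | succ k ih =>
          have : ((k+1 : ℕ) : Ordinal) = (k : Ordinal) + 1 := by
            simp [Nat.cast_succ]
          rw [this, ← add_assoc, Ordinal.add_one_eq_succ]
          exact hlim.succ_lt ih
  have hinj : Function.Injective (fun n : ℕ => δ + (n : Ordinal)) := by
    intro a b hab
    have := add_left_cancel hab
    exact_mod_cast this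
  exact infinite_of_injective_forall_mem hinj hmem

lemma Z_card_lt {δ : Ordinal} (hδ : δ ∈ p.C) :
    Cardinal.mk ↥(p.Z δ) < Cardinal.lift.{1,0} κ := by
  have hlt : δ < κ.ord := p.club.1 hδ
  have hnext := nextIn_mem_of_lt p.club hlt
  have h1 : Cardinal.mk ↥(p.Z δ) ≤ Cardinal.mk ↥(Iio (nextIn p.C δ)) :=
    Cardinal.mk_le_mk_of_subset (fun x hx => hx.2)
  have h2 : Cardinal.mk ↥(Iio (nextIn p.C δ)) = Cardinal.lift.{1,0} (nextIn p.C δ).card :=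
    Ordinal.mk_Iio_ordinal _
  have h3 : (nextIn p.C δ).card < κ := Cardinal.lt_ord.1 (p.club.1 hnext.1)
  calc Cardinal.mk ↥(p.Z δ) ≤ _ := h1
    _ = _ := h2
    _ < Cardinal.lift.{1,0} κ := Cardinal.lift_lt.2 h3

lemma hash_fiber_subsingleton (ξ : Ordinal) : {t | t ∈ hashQ p ∧ t.1 = ξ}.Subsingleton := by
  rintro t ⟨⟨α, hα, rfl⟩, h1⟩ t' ⟨⟨α', hα', rfl⟩, h1'⟩
  simp only at h1 h1'
  subst h1; subst h1'; rfl

lemma mk_club_eq (C : Set Ordinal) (hC : IsClubIn C κ.ord) (hreg : κ.IsRegular) :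
    Cardinal.mk ↥C = Cardinal.lift.{1,0} κ := by
  apply le_antisymm
  · calc Cardinal.mk ↥C ≤ Cardinal.mk ↥(Iio κ.ord) := Cardinal.mk_le_mk_of_subset hC.1
      _ = Cardinal.lift.{1,0} (κ.ord.card) := Ordinal.mk_Iio_ordinal _
      _ = Cardinal.lift.{1,0} κ := by rw [Cardinal.card_ord]
  · -- cofinality argument
    set s : Set ↥(Iio κ.ord) := {x | x.1 ∈ C} with hs
    have hcof : IsCofinal s := by
      intro a
      obtain ⟨δ, hδ, hlt⟩ := hC.2.1 a.1 a.2
      exact ⟨⟨δ, hC.1 hδ⟩, hδ, le_of_lt hlt⟩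
    have h1 := Order.cof_le hcof
    rw [Ordinal.cof_Iio, ← Ordinal.lift_cof, hreg.cof_ord] at h1
    have h2 : Cardinal.mk ↥s = Cardinal.mk ↥C := Cardinal.mk_congr
      { toFun := fun x => ⟨x.1.1, x.2⟩, invFun := fun c => ⟨⟨c.1, hC.1 c.2⟩, c.2⟩,
        left_inv := fun _ => rfl, right_inv := fun _ => rfl }
    rw [← h2]; exact h1

lemma mk_hash (hreg : κ.IsRegular) :
    Cardinal.mk ↥(hashQ p) = Cardinal.lift.{1,0} κ := by
  have hbij : Function.Bijective
      (fun α : ↥p.C => (⟨(α.1, p.Z α.1, p.d α.1), ⟨α.1, α.2, rfl⟩⟩ : ↥(hashQ p))) := by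
    constructor
    · intro a b hab
      have h1 := Subtype.ext_iff.1 hab
      have h2 := congrArg Prod.fst h1
      exact Subtype.ext h2
    · rintro ⟨t, α, hα, rfl⟩
      exact ⟨⟨α, hα⟩, rfl⟩
  rw [← Cardinal.mk_congr (Equiv.ofBijective _ hbij), mk_club_eq p.C p.club hreg]

theorem part1 (hreg : κ.IsRegular) (hunc : Cardinal.aleph0 < κ) :
    IsQStar κ (hashQ p) ∧ StronglyDisjoint (hashQ p) ∧ filStar κ (hashQ p) = fil p := by
  refine ⟨⟨?_, ?_, mk_hash p hreg⟩, ⟨?_, ?_⟩, ?_⟩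
  · rintro t ⟨α, hα, rfl⟩
    exact ⟨p.club.1 hα, Z_subset p hα,
      Cardinal.aleph0_le_mk_iff.2 (Set.infinite_coe_iff.2 (Z_infinite p hα)),
      Z_card_lt p hα, p.ultra α hα⟩
  · intro ξ _
    have h1 : Cardinal.mk ↥{t | t ∈ hashQ p ∧ t.1 = ξ} ≤ 1 :=
      Cardinal.mk_le_one_iff_set_subsingleton.2 (hash_fiber_subsingleton p ξ)
    have h2 : (1 : Cardinal.{1}) < Cardinal.lift.{1,0} κ := by
      calc (1 : Cardinal.{1}) < Cardinal.aleph0 := Cardinal.one_lt_aleph0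
        _ = Cardinal.lift.{1,0} Cardinal.aleph0 := Cardinal.lift_aleph0.symm
        _ < Cardinal.lift.{1,0} κ := Cardinal.lift_lt.2 hunc
    exact lt_of_le_of_lt h1 h2
  · rintro t ⟨α, hα, rfl⟩ t' ⟨α', hα', rfl⟩ h
    simp only at h
    subst h; rfl
  · rintro t ⟨α, hα, rfl⟩ t' ⟨α', hα', rfl⟩ h
    simp only at h ⊢
    intro x hx
    have : nextIn p.C α ≤ α' := csInf_le (OrderBot.bddBelow _) ⟨hα', by simpa using h⟩
    exact lt_of_lt_of_le hx.2 this
  · ext A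
    constructor
    · rintro ⟨hA, ε, hε, h⟩
      exact ⟨hA, ε, hε, fun δ hδ hεδ => h (δ, p.Z δ, p.d δ) ⟨δ, hδ, rfl⟩ hεδ⟩
    · rintro ⟨hA, ε, hε, h⟩
      refine ⟨hA, ε, hε, ?_⟩
      rintro t ⟨α, hα, rfl⟩ hεα
      exact h α hα hεα

end Part1

-- ==== part 2 ====
lemma isLimit_of_not_succ_of_ne_zero' {o : Ordinal} (h : ¬∃ a, o = Order.succ a) (h0 : o ≠ 0) :
    Order.IsSuccLimit o :=
  Ordinal.isSuccLimit_iff.2 ⟨h0, Order.isSuccPrelimit_iff_succ_ne.2 fun a ha => h ⟨a, ha.symm⟩⟩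

section Part2

open Cardinal in
lemma isRegular_lift {κ : Cardinal.{0}} (hreg : κ.IsRegular) :
    (Cardinal.lift.{1,0} κ).IsRegular := by
  constructor
  · rw [← Cardinal.lift_aleph0.{1,0}]
    exact Cardinal.lift_le.2 hreg.1
  · rw [← Cardinal.lift_ord, ← Ordinal.lift_cof, hreg.cof_eq]

variable {κ : Cardinal.{0}} {r : Set (Ordinal × Set Ordinal × Set (Set Ordinal))}

abbrev Trip := Ordinal × Set Ordinal × Set (Set Ordinal)

/-- the least (limit) ordinal δ such that `Z_t ∩ [0, δ)` is `d_t`-large. -/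
def bnd (t : Trip) : Ordinal := sInf {δ | t.2.1 ∩ Iio δ ∈ t.2.2}

def Bset (r : Set Trip) : Set Ordinal := {β | ∃ t ∈ r, bnd t = β}

def Cset (κ : Cardinal.{0}) (r : Set Trip) : Set Ordinal :=
  {δ | δ < κ.ord ∧ (δ ∈ Bset r ∨ (δ ≠ 0 ∧ sSup (Bset r ∩ Iio δ) = δ))}

def dP (κ : Cardinal.{0}) (r : Set Trip) (δ : Ordinal) : Set (Set Ordinal) :=
  {S | S ⊆ Ico δ (nextIn (Cset κ r) δ) ∧
    ∃ t ∈ r, bnd t = nextIn (Cset κ r) δ ∧ S ∩ t.2.1 ∈ t.2.2}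

section facts
variable (hreg : κ.IsRegular) (hunc : Cardinal.aleph0 < κ)
  (hr : IsQStar κ r) (hsd : StronglyDisjoint r)

/-- the first coordinates are unbounded below `κ.ord`. -/
lemma exists_high (hreg : κ.IsRegular) (hr : IsQStar κ r) :
    ∀ β < κ.ord, ∃ t ∈ r, β < t.1 := by
  intro β hβ
  by_contra hcon
  push_neg at hcon
  set ξ₀ := β + 1 with hξ₀
  have hξlt : ξ₀ < κ.ord := by
    rw [hξ₀, Ordinal.add_one_eq_succ]
    exact (Cardinal.isSuccLimit_ord hreg.1).succ_lt hβ
  have hsub : r ⊆ ⋃ ξ : ↥(Iio ξ₀), {t | t ∈ r ∧ t.1 = ξ.1} := by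
    intro t ht
    have h1 : t.1 ≤ β := hcon t ht
    have h2 : t.1 < ξ₀ := lt_of_le_of_lt h1 (by rw [hξ₀, Ordinal.add_one_eq_succ]; exact Order.lt_succ β)
    exact mem_iUnion.2 ⟨⟨t.1, h2⟩, ht, rfl⟩
  have hcard : Cardinal.mk ↥r ≤
      Cardinal.sum (fun ξ : ↥(Iio ξ₀) => Cardinal.mk ↥{t | t ∈ r ∧ t.1 = ξ.1}) :=
    le_trans (Cardinal.mk_le_mk_of_subset hsub) (Cardinal.mk_iUnion_le_sum_mk)
  have hlt : Cardinal.sum (fun ξ : ↥(Iio ξ₀) => Cardinal.mk ↥{t | t ∈ r ∧ t.1 = ξ.1}) <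
      Cardinal.lift.{1,0} κ := by
    apply Cardinal.sum_lt_of_isRegular (isRegular_lift hreg)
    · rw [Ordinal.mk_Iio_ordinal]
      exact Cardinal.lift_lt.2 (Cardinal.lt_ord.1 hξlt)
    · intro ξ
      exact hr.2.1 ξ.1 (lt_trans ξ.2 hξlt)
  rw [hr.2.2] at hcard
  exact absurd (lt_of_le_of_lt hcard hlt) (lt_irrefl _)

lemma bnd_spec (hr : IsQStar κ r) {t : Trip} (ht : t ∈ r) : t.2.1 ∩ Iio (bnd t) ∈ t.2.2 := by
  have huf := (hr.1 t ht).2.2.2.2.1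
  have hne : {δ | t.2.1 ∩ Iio δ ∈ t.2.2}.Nonempty := by
    refine ⟨κ.ord, ?_⟩
    have : t.2.1 ∩ Iio κ.ord = t.2.1 := inter_eq_self_of_subset_left
      (fun x hx => ((hr.1 t ht).2.1 hx).2)
    simpa [this] using huf.2.1
  exact csInf_mem hne

lemma bnd_small_not (hr : IsQStar κ r) {t : Trip} (ht : t ∈ r) {γ : Ordinal} (hγ : γ < bnd t) :
    t.2.1 ∩ Iio γ ∉ t.2.2 :=
  notMem_of_lt_csInf (s := {δ | t.2.1 ∩ Iio δ ∈ t.2.2}) hγ (OrderBot.bddBelow _)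

lemma bnd_isLimit (hr : IsQStar κ r) {t : Trip} (ht : t ∈ r) : Order.IsSuccLimit (bnd t) := by
  have hnp := (hr.1 t ht).2.2.2.2
  have huf := hnp.1
  apply isLimit_of_not_succ_of_ne_zero'
  · rintro ⟨γ, hγ⟩
    have hmem : t.2.1 ∩ Iio (Order.succ γ) ∈ t.2.2 := hγ ▸ bnd_spec hr ht
    have hlt : γ < bnd t := by rw [hγ]; exact Order.lt_succ γ
    have hnot : t.2.1 ∩ Iio γ ∉ t.2.2 := bnd_small_not hr ht hlt
    have hcompl : t.2.1 \ (t.2.1 ∩ Iio γ) ∈ t.2.2 := uf_compl huf inter_subset_left hnot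
    have hT : (t.2.1 ∩ Iio (Order.succ γ)) ∩ (t.2.1 \ (t.2.1 ∩ Iio γ)) ∈ t.2.2 :=
      huf.2.2.2.2.1 _ _ hmem hcompl
    have hTsub : (t.2.1 ∩ Iio (Order.succ γ)) ∩ (t.2.1 \ (t.2.1 ∩ Iio γ)) ⊆ {γ} := by
      rintro x ⟨⟨hxZ, hx1⟩, ⟨_, hx2⟩⟩
      have h3 : ¬ x < γ := fun h => hx2 ⟨hxZ, h⟩
      show x = γ
      have h5 : x ≤ γ := Order.lt_succ_iff.1 hx1
      exact le_antisymm h5 (not_lt.1 h3)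
    have hTne := uf_nonempty huf hT
    obtain ⟨x, hx⟩ := hTne
    have hxγ : x = γ := hTsub hx
    have hγZ : ({γ} : Set Ordinal) ⊆ t.2.1 := by
      rintro y rfl
      exact hxγ ▸ hx.1.1
    have : ({γ} : Set Ordinal) ∈ t.2.2 := huf.2.2.2.1 _ _ hT hTsub hγZ
    exact hnp.2 γ this
  · intro h0
    have := bnd_spec hr ht
    rw [h0] at this
    simp only [not_lt_zero, Iio, setOf_false, inter_empty] at this
    exact huf.2.2.1 this

end facts
end Part2

section facts2
variable {κ : Cardinal.{0}} {r : Set Trip}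

lemma bnd_gt (hr : IsQStar κ r) {t : Trip} (ht : t ∈ r) : t.1 < bnd t := by
  obtain ⟨x, hxZ, hxlt⟩ := uf_nonempty (hr.1 t ht).2.2.2.2.1 (bnd_spec hr ht)
  exact lt_of_le_of_lt ((hr.1 t ht).2.1 hxZ).1 hxlt

lemma bnd_le (hr : IsQStar κ r) (hsd : StronglyDisjoint r) {t₁ t₂ : Trip}
    (ht₁ : t₁ ∈ r) (ht₂ : t₂ ∈ r) (h12 : t₁.1 < t₂.1) : bnd t₁ ≤ t₂.1 := by
  have hZ : t₁.2.1 ⊆ Iio t₂.1 := hsd.2 t₁ ht₁ t₂ ht₂ h12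
  have : t₁.2.1 ∩ Iio t₂.1 ∈ t₁.2.2 := by
    rw [inter_eq_self_of_subset_left hZ]
    exact (hr.1 t₁ ht₁).2.2.2.2.1.2.1
  exact csInf_le (OrderBot.bddBelow _) this

lemma bnd_lt_ord (hreg : κ.IsRegular) (hr : IsQStar κ r) (hsd : StronglyDisjoint r) {t : Trip} (ht : t ∈ r) :
    bnd t < κ.ord := by
  obtain ⟨t₂, ht₂, hgt⟩ := exists_high hreg hr t.1 (hr.1 t ht).1
  exact lt_of_le_of_lt (bnd_le hr hsd ht ht₂ hgt) (hr.1 t₂ ht₂).1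

lemma bnd_inj (hr : IsQStar κ r) (hsd : StronglyDisjoint r) {t₁ t₂ : Trip}
    (ht₁ : t₁ ∈ r) (ht₂ : t₂ ∈ r) (h : bnd t₁ = bnd t₂) : t₁ = t₂ := by
  rcases lt_trichotomy t₁.1 t₂.1 with hlt | heq | hgt
  · exact absurd (lt_of_le_of_lt (h ▸ bnd_le hr hsd ht₁ ht₂ hlt) (bnd_gt hr ht₂)) (lt_irrefl _)
  · exact hsd.1 t₁ ht₁ t₂ ht₂ heq
  · exact absurd (lt_of_le_of_lt (h ▸ bnd_le hr hsd ht₂ ht₁ hgt) (bnd_gt hr ht₁)) (lt_irrefl _)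

lemma Bset_subset_Cset (hreg : κ.IsRegular) (hr : IsQStar κ r) (hsd : StronglyDisjoint r) :
    Bset r ⊆ Cset κ r := by
  rintro β ⟨t, ht, rfl⟩
  exact ⟨bnd_lt_ord hreg hr hsd ht, Or.inl ⟨t, ht, rfl⟩⟩

lemma Cset_lt (β : Ordinal) (hβ : β ∈ Cset κ r) : β < κ.ord := hβ.1

lemma Cset_unbounded (hreg : κ.IsRegular) (hr : IsQStar κ r) (hsd : StronglyDisjoint r) :
    ∀ β < κ.ord, ∃ δ ∈ Cset κ r, β < δ := by
  intro β hβ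
  obtain ⟨t, ht, hgt⟩ := exists_high hreg hr β hβ
  exact ⟨bnd t, Bset_subset_Cset hreg hr hsd ⟨t, ht, rfl⟩, lt_trans hgt (bnd_gt hr ht)⟩

lemma Bset_isLimit (hr : IsQStar κ r) {β : Ordinal} (hβ : β ∈ Bset r) : Order.IsSuccLimit β := by
  obtain ⟨t, ht, rfl⟩ := hβ
  exact bnd_isLimit hr ht

lemma Cset_isLimit (hr : IsQStar κ r) : ∀ δ ∈ Cset κ r, Order.IsSuccLimit δ := by
  rintro δ ⟨hlt, hB | ⟨h0, hsup⟩⟩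
  · exact Bset_isLimit hr hB
  · apply isLimit_of_not_succ_of_ne_zero' _ h0
    rintro ⟨γ, rfl⟩
    have hne : (Bset r ∩ Iio (Order.succ γ)).Nonempty := by
      by_contra hcon
      rw [not_nonempty_iff_eq_empty] at hcon
      rw [hcon] at hsup
      simp at hsup
      exact h0 hsup.symm
    have : sSup (Bset r ∩ Iio (Order.succ γ)) ≤ γ := by
      apply csSup_le hne
      intro b hb
      exact Order.lt_succ_iff.1 hb.2
    rw [hsup] at this
    exact absurd this (by simp)

lemma Cset_closed (hr : IsQStar κ r) :
    ∀ β < κ.ord, β ≠ 0 → sSup (Cset κ r ∩ Iio β) = β → β ∈ Cset κ r := by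
  intro β hβ h0 hsup
  have hCne : (Cset κ r ∩ Iio β).Nonempty := by
    by_contra hcon
    rw [not_nonempty_iff_eq_empty] at hcon
    rw [hcon] at hsup
    simp at hsup
    exact h0 hsup.symm
  have hBsub : ∀ c ∈ Cset κ r, c < β → (∃ b ∈ Bset r, b < β) ∧ c ≤ sSup (Bset r ∩ Iio β) := by
    intro c hcC hcβ
    have hbdd : BddAbove (Bset r ∩ Iio β) := ⟨β, fun x hx => le_of_lt (mem_Iio.1 hx.2)⟩
    rcases hcC.2 with hB | ⟨hc0, hcsup⟩
    · exact ⟨⟨c, hB, hcβ⟩, le_csSup hbdd ⟨hB, mem_Iio.2 hcβ⟩⟩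
    · have hne' : (Bset r ∩ Iio c).Nonempty := by
        by_contra hcon
        rw [not_nonempty_iff_eq_empty] at hcon
        rw [hcon] at hcsup
        simp at hcsup
        exact hc0 hcsup.symm
      obtain ⟨b, hbB, hbc⟩ := hne'
      refine ⟨⟨b, hbB, lt_trans (mem_Iio.1 hbc) hcβ⟩, ?_⟩
      rw [← hcsup]
      apply csSup_le_csSup hbdd (⟨b, hbB, hbc⟩ : (Bset r ∩ Iio c).Nonempty)
      rintro x ⟨hxB, hxc⟩
      exact ⟨hxB, mem_Iio.2 (lt_trans (mem_Iio.1 hxc) hcβ)⟩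
  have hBne : (Bset r ∩ Iio β).Nonempty := by
    obtain ⟨c, hcC, hcβ⟩ := hCne
    obtain ⟨⟨b, hb, hbβ⟩, -⟩ := hBsub c hcC (mem_Iio.1 hcβ)
    exact ⟨b, hb, mem_Iio.2 hbβ⟩
  refine ⟨hβ, Or.inr ⟨h0, ?_⟩⟩
  apply le_antisymm
  · exact csSup_le hBne (fun b hb => le_of_lt (mem_Iio.1 hb.2))
  · have hkey : sSup (Cset κ r ∩ Iio β) ≤ sSup (Bset r ∩ Iio β) :=
      csSup_le hCne (fun c hc => (hBsub c hc.1 (mem_Iio.1 hc.2)).2)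
    rw [hsup] at hkey
    exact hkey

end facts2

section facts3
variable {κ : Cardinal.{0}} {r : Set Trip}

lemma nextC_mem (hreg : κ.IsRegular) (hr : IsQStar κ r) (hsd : StronglyDisjoint r)
    {δ : Ordinal} (hδ : δ < κ.ord) :
    nextIn (Cset κ r) δ ∈ Cset κ r ∧ δ < nextIn (Cset κ r) δ := by
  obtain ⟨c, hc, hlt⟩ := Cset_unbounded hreg hr hsd δ hδ
  have hne : (Cset κ r \ Iic δ).Nonempty := ⟨c, hc, by simpa using hlt⟩
  have h := csInf_mem hne
  exact ⟨h.1, by simpa [nextIn] using h.2⟩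

lemma no_C_between {δ c : Ordinal} (hc : c ∈ Cset κ r) (h1 : δ < c)
    (h2 : c < nextIn (Cset κ r) δ) : False := by
  have : nextIn (Cset κ r) δ ≤ c := csInf_le (OrderBot.bddBelow _) ⟨hc, by simpa using h1⟩
  exact absurd (lt_of_le_of_lt this h2) (lt_irrefl _)

/-- the next point of `C` after a point of `C` is always a `bnd`-point. -/
lemma nextC_mem_B (hreg : κ.IsRegular) (hr : IsQStar κ r) (hsd : StronglyDisjoint r)
    {δ : Ordinal} (hδ : δ < κ.ord) :
    ∃ t ∈ r, bnd t = nextIn (Cset κ r) δ := by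
  obtain ⟨t₀, ht₀, hgt₀⟩ := exists_high hreg hr δ hδ
  have hBne : (Bset r \ Iic δ).Nonempty :=
    ⟨bnd t₀, ⟨t₀, ht₀, rfl⟩, by simpa using lt_trans hgt₀ (bnd_gt hr ht₀)⟩
  set β := sInf (Bset r \ Iic δ) with hβ
  have hβmem := csInf_mem hBne
  have hβB : β ∈ Bset r := hβmem.1
  have hβgt : δ < β := by simpa using hβmem.2
  have hν := nextC_mem hreg hr hsd hδ
  set ν := nextIn (Cset κ r) δ with hνdef
  have hνβ : ν ≤ β := csInf_le (OrderBot.bddBelow _)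
    ⟨Bset_subset_Cset hreg hr hsd hβB, by simpa using hβgt⟩
  rcases hν.1.2 with hB | ⟨h0, hsup⟩
  · obtain ⟨t, ht, hbt⟩ := hB
    exact ⟨t, ht, hbt⟩
  · exfalso
    have hne' : (Bset r ∩ Iio ν).Nonempty := by
      by_contra hcon
      rw [not_nonempty_iff_eq_empty] at hcon
      rw [hcon] at hsup
      simp at hsup
      exact h0 hsup.symm
    have : sSup (Bset r ∩ Iio ν) ≤ δ := by
      apply csSup_le hne'
      rintro b ⟨hbB, hbν⟩
      by_contra hcon
      push_neg at hcon
      have hblt : b < β := lt_of_lt_of_le (mem_Iio.1 hbν) hνβ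
      have : β ≤ b := csInf_le (OrderBot.bddBelow _) ⟨hbB, by simpa using hcon⟩
      exact absurd (lt_of_le_of_lt this hblt) (lt_irrefl _)
    rw [hsup] at this
    exact absurd (lt_of_lt_of_le hν.2 this) (lt_irrefl _)

/-- the piece of the chosen triple in the interval is large. -/
lemma piece_mem (hreg : κ.IsRegular) (hr : IsQStar κ r) (hsd : StronglyDisjoint r)
    {δ : Ordinal} (hδ : δ < κ.ord) {t : Trip} (ht : t ∈ r)
    (hb : bnd t = nextIn (Cset κ r) δ) :
    t.2.1 ∩ Ico δ (nextIn (Cset κ r) δ) ∈ t.2.2 := by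
  have huf := (hr.1 t ht).2.2.2.2.1
  have hδb : δ < bnd t := by rw [hb]; exact (nextC_mem hreg hr hsd hδ).2
  have h1 : t.2.1 ∩ Iio δ ∉ t.2.2 := bnd_small_not hr ht hδb
  have h2 : t.2.1 \ (t.2.1 ∩ Iio δ) ∈ t.2.2 := uf_compl huf inter_subset_left h1
  have h3 : (t.2.1 ∩ Iio (bnd t)) ∩ (t.2.1 \ (t.2.1 ∩ Iio δ)) ∈ t.2.2 :=
    huf.2.2.2.2.1 _ _ (bnd_spec hr ht) h2
  have heq : (t.2.1 ∩ Iio (bnd t)) ∩ (t.2.1 \ (t.2.1 ∩ Iio δ)) =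
      t.2.1 ∩ Ico δ (nextIn (Cset κ r) δ) := by
    rw [← hb]
    ext x
    simp only [mem_inter_iff, mem_Iio, mem_diff, mem_Ico, not_and, not_lt]
    constructor
    · rintro ⟨⟨hxZ, hxb⟩, ⟨-, hx2⟩⟩
      exact ⟨hxZ, hx2 hxZ, hxb⟩
    · rintro ⟨hxZ, hxδ, hxb⟩
      exact ⟨⟨hxZ, hxb⟩, hxZ, fun _ => hxδ⟩
  rwa [heq] at h3

/-- every triple is served by the interval just before `bnd t`. -/
lemma serve (hreg : κ.IsRegular) (hr : IsQStar κ r) (hsd : StronglyDisjoint r)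
    {t : Trip} (ht : t ∈ r) (hne : (Cset κ r ∩ Iio (bnd t)).Nonempty) :
    sSup (Cset κ r ∩ Iio (bnd t)) ∈ Cset κ r ∧
      nextIn (Cset κ r) (sSup (Cset κ r ∩ Iio (bnd t))) = bnd t := by
  set S := Cset κ r ∩ Iio (bnd t) with hS
  set δ := sSup S with hδ
  have hbdd : BddAbove S := ⟨bnd t, fun x hx => le_of_lt (mem_Iio.1 hx.2)⟩
  -- every element of S is ≤ t.1
  have hles : ∀ c ∈ S, c ≤ t.1 := by
    have hbkey : ∀ b ∈ Bset r, b < bnd t → b ≤ t.1 := by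
      rintro b ⟨t', ht', rfl⟩ hblt
      rcases lt_trichotomy t'.1 t.1 with hlt | heq | hgt
      · exact bnd_le hr hsd ht' ht hlt
      · rw [hsd.1 t' ht' t ht heq] at hblt
        exact absurd hblt (lt_irrefl _)
      · exact absurd (lt_of_le_of_lt (bnd_le hr hsd ht ht' hgt) (bnd_gt hr ht')) 
          (fun h => absurd (lt_trans h hblt) (lt_irrefl _))
    rintro c ⟨hcC, hcb⟩
    rcases hcC.2 with hB | ⟨h0, hsup⟩
    · exact hbkey c hB (mem_Iio.1 hcb)
    · have hne' : (Bset r ∩ Iio c).Nonempty := by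
        by_contra hcon
        rw [not_nonempty_iff_eq_empty] at hcon
        rw [hcon] at hsup
        simp at hsup
        exact h0 hsup.symm
      rw [← hsup]
      apply csSup_le hne'
      rintro b ⟨hbB, hbc⟩
      exact hbkey b hbB (lt_trans (mem_Iio.1 hbc) (mem_Iio.1 hcb))
  have hδle : δ ≤ t.1 := csSup_le hne hles
  have hδlt : δ < bnd t := lt_of_le_of_lt hδle (bnd_gt hr ht)
  have hδκ : δ < κ.ord := lt_of_le_of_lt hδle (hr.1 t ht).1
  have hδC : δ ∈ Cset κ r := by
    by_cases hmem : δ ∈ S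
    · exact hmem.1
    · have hSeq : Cset κ r ∩ Iio δ = S := by
        ext c
        constructor
        · rintro ⟨hcC, hcδ⟩
          exact ⟨hcC, mem_Iio.2 (lt_trans (mem_Iio.1 hcδ) hδlt)⟩
        · rintro ⟨hcC, hcb⟩
          have h1 : c ≤ δ := le_csSup hbdd ⟨hcC, hcb⟩
          have h2 : c ≠ δ := fun h => hmem (h ▸ ⟨hcC, hcb⟩)
          exact ⟨hcC, mem_Iio.2 (lt_of_le_of_ne h1 h2)⟩
      have h0 : δ ≠ 0 := by
        obtain ⟨c, hc⟩ := hne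
        have h1 : c ≤ δ := le_csSup hbdd hc
        have h2 : c ≠ δ := fun h => hmem (h ▸ hc)
        have h3 : (0:Ordinal) < c ∨ c = 0 := by
          rcases eq_or_ne c 0 with h | h
          · exact Or.inr h
          · exact Or.inl (pos_iff_ne_zero.2 h)
        rcases h3 with h4 | h4
        · exact pos_iff_ne_zero.1 (lt_of_lt_of_le h4 h1)
        · -- c = 0 but C-points are limits hence nonzero
          exfalso
          exact (Cset_isLimit hr c hc.1).ne_bot h4
      apply Cset_closed hr δ hδκ h0
      rw [hSeq]
  refine ⟨hδC, ?_⟩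
  apply le_antisymm
  · apply csInf_le (OrderBot.bddBelow _)
    exact ⟨Bset_subset_Cset hreg hr hsd ⟨t, ht, rfl⟩, by simpa using hδlt⟩
  · by_contra hcon
    push_neg at hcon
    have hν := nextC_mem hreg hr hsd hδκ
    have : nextIn (Cset κ r) δ ∈ S := ⟨hν.1, mem_Iio.2 hcon⟩
    exact absurd (lt_of_le_of_lt (le_csSup hbdd this) hν.2) (lt_irrefl _)

end facts3

section facts4
variable {κ : Cardinal.{0}} {r : Set Trip}

lemma mem_dP_iff (hr : IsQStar κ r) (hsd : StronglyDisjoint r)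
    {δ : Ordinal} {t : Trip} (ht : t ∈ r) (hb : bnd t = nextIn (Cset κ r) δ)
    {S : Set Ordinal} :
    S ∈ dP κ r δ ↔ S ⊆ Ico δ (nextIn (Cset κ r) δ) ∧ S ∩ t.2.1 ∈ t.2.2 := by
  constructor
  · rintro ⟨hsub, t', ht', hb', hmem⟩
    have : t' = t := bnd_inj hr hsd ht' ht (hb'.trans hb.symm)
    exact ⟨hsub, this ▸ hmem⟩
  · rintro ⟨hsub, hmem⟩
    exact ⟨hsub, t, ht, hb, hmem⟩

lemma dP_ultra (hreg : κ.IsRegular) (hr : IsQStar κ r) (hsd : StronglyDisjoint r)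
    {δ : Ordinal} (hδ : δ ∈ Cset κ r) :
    IsNonprincipalOn (Ico δ (nextIn (Cset κ r) δ)) (dP κ r δ) := by
  obtain ⟨t, ht, hb⟩ := nextC_mem_B hreg hr hsd hδ.1
  have hb' : bnd t = nextIn (Cset κ r) δ := hb
  have huf := (hr.1 t ht).2.2.2.2.1
  have hnp := (hr.1 t ht).2.2.2.2.2
  have hpiece : t.2.1 ∩ Ico δ (nextIn (Cset κ r) δ) ∈ t.2.2 :=
    piece_mem hreg hr hsd hδ.1 ht hb'
  set I := Ico δ (nextIn (Cset κ r) δ) with hI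
  have hiff : ∀ {S : Set Ordinal}, S ∈ dP κ r δ ↔ S ⊆ I ∧ S ∩ t.2.1 ∈ t.2.2 :=
    fun {S} => mem_dP_iff hr hsd ht hb'
  constructor
  constructor
  · -- subsets of I
    intro A hA
    exact (hiff.1 hA).1
  refine ⟨?_, ?_, ?_, ?_, ?_⟩
  · -- I itself
    exact hiff.2 ⟨subset_rfl, by rwa [inter_comm] at hpiece⟩
  · -- empty not in
    intro h
    have := (hiff.1 h).2
    simp only [empty_inter] at this
    exact huf.2.2.1 this
  · -- upward
    intro A B hA hAB hBI
    have h1 := (hiff.1 hA).2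
    apply hiff.2
    refine ⟨hBI, ?_⟩
    exact huf.2.2.2.1 _ _ h1 (inter_subset_inter_left _ hAB) inter_subset_right
  · -- intersection
    intro A B hA hB
    have h1 := (hiff.1 hA).2
    have h2 := (hiff.1 hB).2
    apply hiff.2
    refine ⟨(inter_subset_left).trans (hiff.1 hA).1, ?_⟩
    have : (A ∩ B) ∩ t.2.1 = (A ∩ t.2.1) ∩ (B ∩ t.2.1) := by
      ext x; simp only [mem_inter_iff]; tauto
    rw [this]
    exact huf.2.2.2.2.1 _ _ h1 h2
  · -- decisive
    intro A hAI
    rcases huf.2.2.2.2.2 (A ∩ t.2.1) inter_subset_right with h | h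
    · exact Or.inl (hiff.2 ⟨hAI, h⟩)
    · refine Or.inr (hiff.2 ⟨diff_subset, ?_⟩)
      have heq : (I \ A) ∩ t.2.1 = (t.2.1 \ (A ∩ t.2.1)) ∩ (t.2.1 ∩ I) := by
        ext x
        simp only [mem_inter_iff, mem_diff, mem_inter_iff]
        constructor
        · rintro ⟨⟨hxI, hxA⟩, hxZ⟩
          exact ⟨⟨hxZ, fun hc => hxA hc.1⟩, hxZ, hxI⟩
        · rintro ⟨⟨hxZ, hxA⟩, -, hxI⟩
          exact ⟨⟨hxI, fun hc => hxA ⟨hc, hxZ⟩⟩, hxZ⟩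
      rw [heq]
      exact huf.2.2.2.2.1 _ _ h hpiece
  · -- nonprincipal
    intro x hx
    have h1 := (hiff.1 hx).2
    obtain ⟨y, hy⟩ := uf_nonempty huf h1
    have hyx : y = x := hy.1
    subst hyx
    have : ({y} : Set Ordinal) ∩ t.2.1 = {y} := by
      rw [inter_eq_self_of_subset_left]
      rintro z rfl
      exact hy.2
    rw [this] at h1
    exact hnp y h1

/-- The `QZero` built from a strongly disjoint `r`. -/
def pOf (hreg : κ.IsRegular) (hunc : Cardinal.aleph0 < κ) (hr : IsQStar κ r)
    (hsd : StronglyDisjoint r) : QZero κ.ord where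
  C := Cset κ r
  d := dP κ r
  club := ⟨fun δ hδ => hδ.1, Cset_unbounded hreg hr hsd, Cset_closed hr⟩
  limit := Cset_isLimit hr
  ultra := fun δ hδ => dP_ultra hreg hr hsd hδ

theorem part2 (hreg : κ.IsRegular) (hunc : Cardinal.aleph0 < κ) (hr : IsQStar κ r)
    (hsd : StronglyDisjoint r) : filStar κ r = fil (pOf hreg hunc hr hsd) := by
  set p := pOf hreg hunc hr hsd with hp
  have hpC : p.C = Cset κ r := rfl
  have hpd : p.d = dP κ r := rfl
  ext A
  constructor
  · rintro ⟨hA, ε, hε, h⟩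
    obtain ⟨t₀, ht₀, hgt₀⟩ := exists_high hreg hr ε hε
    refine ⟨hA, t₀.1, (hr.1 t₀ ht₀).1, ?_⟩
    intro δ hδ hεδ
    rw [hpC] at hδ
    obtain ⟨t, ht, hb⟩ := nextC_mem_B hreg hr hsd hδ.1
    have hpiece := piece_mem hreg hr hsd hδ.1 ht hb
    -- the chosen triple has large first coordinate
    have htε : ε ≤ t.1 := by
      obtain ⟨z, hzZ, hzI⟩ := uf_nonempty (hr.1 t ht).2.2.2.2.1 hpiece
      have hz1 : t₀.1 ≤ z := le_trans hεδ hzI.1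
      rcases lt_trichotomy t.1 t₀.1 with hlt | heq | hgt
      · exfalso
        have : z < t₀.1 := hsd.2 t ht t₀ ht₀ hlt hzZ
        exact absurd (lt_of_le_of_lt hz1 this) (lt_irrefl _)
      · rw [hsd.1 t ht t₀ ht₀ heq]
        exact le_of_lt hgt₀
      · exact le_of_lt (lt_trans hgt₀ hgt)
    have hAZ : A ∩ t.2.1 ∈ t.2.2 := h t ht htε
    show A ∩ p.Z δ ∈ p.d δ
    have hZeq : p.Z δ = Ico δ (nextIn (Cset κ r) δ) := rfl
    rw [hZeq, hpd]
    apply (mem_dP_iff hr hsd ht hb).2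
    refine ⟨inter_subset_right, ?_⟩
    have heq : (A ∩ Ico δ (nextIn (Cset κ r) δ)) ∩ t.2.1 =
        (A ∩ t.2.1) ∩ (t.2.1 ∩ Ico δ (nextIn (Cset κ r) δ)) := by
      ext x; simp only [mem_inter_iff]; tauto
    rw [heq]
    exact (hr.1 t ht).2.2.2.2.1.2.2.2.2.1 _ _ hAZ hpiece
  · rintro ⟨hA, ε', hε', h⟩
    have hν := nextC_mem hreg hr hsd hε'
    set ε := nextIn (Cset κ r) ε' with hεdef
    refine ⟨hA, ε, hν.1.1, ?_⟩
    intro t ht htε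
    have hbgt : ε < bnd t := lt_of_le_of_lt htε (bnd_gt hr ht)
    have hne : (Cset κ r ∩ Iio (bnd t)).Nonempty := ⟨ε, hν.1, mem_Iio.2 hbgt⟩
    obtain ⟨hδC, hnext⟩ := serve hreg hr hsd ht hne
    set δ := sSup (Cset κ r ∩ Iio (bnd t)) with hδdef
    have hδε : ε ≤ δ := le_csSup ⟨bnd t, fun x hx => le_of_lt (mem_Iio.1 hx.2)⟩
      ⟨hν.1, mem_Iio.2 hbgt⟩
    have hδε' : ε' ≤ δ := le_trans (le_of_lt hν.2) hδε
    have hint := h δ hδC hδε'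
    have hZeq : p.Z δ = Ico δ (nextIn (Cset κ r) δ) := rfl
    rw [hZeq, hpd] at hint
    obtain ⟨hsub, t', ht', hb', hmem⟩ := hint
    have ht'eq : t' = t := bnd_inj hr hsd ht' ht (by rw [hb', hnext])
    subst ht'eq
    -- upward closure
    have huf := (hr.1 t' ht').2.2.2.2.1
    apply huf.2.2.2.1 _ _ hmem
    · exact inter_subset_inter_left _ inter_subset_left
    · exact inter_subset_right

end facts4

/-- For `p ∈ Q⁰_λ`, `#(p)` is a strongly disjoint element of `Q*_λ` with
`fil*(#(p)) = fil(p)`; conversely every strongly disjoint `r ∈ Q*_λ` satisfies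
`fil*(r) = fil(p)` for some `p ∈ Q⁰_λ`. -/
theorem statement7 (κ : Cardinal.{0}) (hreg : κ.IsRegular) (hunc : Cardinal.aleph0 < κ) :
    (∀ p : QZero κ.ord,
        IsQStar κ (hashQ p) ∧ StronglyDisjoint (hashQ p) ∧ filStar κ (hashQ p) = fil p) ∧
    (∀ r : Set (Ordinal × Set Ordinal × Set (Set Ordinal)),
        IsQStar κ r → StronglyDisjoint r → ∃ p : QZero κ.ord, filStar κ r = fil p) := by
  exact ⟨fun p => part1 p hreg hunc,
    fun r hr hsd => ⟨pOf hreg hunc hr hsd, part2 hreg hunc hr hsd⟩⟩
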